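/- arXiv:2004.07996 — 2 statements merged into one kernel-verified Lean document; each statement's English description precedes it below -/
import Mathlib

section
/- Let n ≥ 4. Let p : Fin n → ℝ² be in counterclockwise convex position, and let q : Fin n → ℝ² be such that q ∘ π is in counterclockwise convex position for some bijection π : Fin n → Fin n. Let T be a tree on vertex set Fin n that is not a star, and suppose the straight-line drawing of T is noncrossing on p and also noncrossing on q. Then there exists a partition Fin n = A ∪ B with 2 ≤ |A| ≤ |B| ≤ n − 2 such that A is a cyclic arc of Fin n and π⁻¹(A) is a cyclic arc of Fin n (equivalently, both A and B are sets of labels consecutive along the convex hull of p and also consecutive along the convex hull of q). -/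
/-- Signed area determinant of two vectors in the plane. -/
def det2 (u v : ℝ × ℝ) : ℝ := u.1 * v.2 - u.2 * v.1

/-- `p` lists points in counterclockwise convex position. -/
def CCWConvex {n : ℕ} (p : Fin n → ℝ × ℝ) : Prop :=
  ∀ i j k : Fin n, i < j → j < k → 0 < det2 (p j - p i) (p k - p i)

/-- The path visiting `f 0, f 1, …` is noncrossing: consecutive edges meet exactly at
their shared vertex, and nonconsecutive edges are disjoint. -/
def NoncrossingPath {m : ℕ} (f : Fin m → ℝ × ℝ) : Prop :=
  ∀ k l : ℕ, ∀ hk : k + 1 < m, ∀ hl : l + 1 < m, k < l →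
    if l = k + 1 then
      segment ℝ (f ⟨k, by omega⟩) (f ⟨k + 1, hk⟩) ∩
        segment ℝ (f ⟨l, by omega⟩) (f ⟨l + 1, hl⟩) = {f ⟨k + 1, hk⟩}
    else
      Disjoint (segment ℝ (f ⟨k, by omega⟩) (f ⟨k + 1, hk⟩))
        (segment ℝ (f ⟨l, by omega⟩) (f ⟨l + 1, hl⟩))

/-- `A` is a cyclic arc of `Fin n`: a set of the form `{i, i+1, …, i+t-1}` (mod `n`). -/
def IsArc {n : ℕ} (A : Set (Fin n)) : Prop :=
  ∃ i t : ℕ, t ≤ n ∧ ∀ x : Fin n, x ∈ A ↔ ∃ r < t, (x : ℕ) = (i + r) % n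

/-- The straight-line drawing of `G` on the points `p` is noncrossing: segments of two
distinct edges intersect in at most the image of a common endpoint. -/
def NoncrossingDrawing {n : ℕ} (G : SimpleGraph (Fin n)) (p : Fin n → ℝ × ℝ) : Prop :=
  ∀ u v w x : Fin n, G.Adj u v → G.Adj w x → s(u, v) ≠ s(w, x) →
    segment ℝ (p u) (p v) ∩ segment ℝ (p w) (p x) ⊆
      p '' (({u, v} : Set (Fin n)) ∩ {w, x})

open SimpleGraph

section Aux



lemma geom_cross {A B C D : ℝ × ℝ}
    (h1 : 0 < det2 (B - A) (C - A)) (h2 : 0 < det2 (B - A) (D - A))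
    (h3 : 0 < det2 (C - A) (D - A)) (h4 : 0 < det2 (C - B) (D - B)) :
    ∃ z, z ∈ segment ℝ A C ∧ z ∈ segment ℝ B D := by
  simp only [det2, Prod.fst_sub, Prod.snd_sub] at h1 h2 h3 h4
  set e1 : ℝ := (B.1 - A.1) * (C.2 - A.2) - (B.2 - A.2) * (C.1 - A.1) with he1
  set e2 : ℝ := (B.1 - A.1) * (D.2 - A.2) - (B.2 - A.2) * (D.1 - A.1) with he2
  set e3 : ℝ := (C.1 - A.1) * (D.2 - A.2) - (C.2 - A.2) * (D.1 - A.1) with he3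
  set e4 : ℝ := (C.1 - B.1) * (D.2 - B.2) - (C.2 - B.2) * (D.1 - B.1) with he4
  have hid : e1 + e3 - e2 = e4 := by rw [he1, he2, he3, he4]; ring
  have hd : (0:ℝ) < e1 + e3 := by linarith
  have hdne : (e1 + e3) ≠ 0 := ne_of_gt hd
  set s : ℝ := e2 / (e1 + e3) with hs
  set t : ℝ := e1 / (e1 + e3) with ht
  have hs0 : 0 ≤ s := le_of_lt (div_pos h2 hd)
  have hs1 : s ≤ 1 := by rw [hs, div_le_one hd]; linarith
  have ht0 : 0 ≤ t := le_of_lt (div_pos h1 hd)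
  have ht1 : t ≤ 1 := by rw [ht, div_le_one hd]; linarith
  refine ⟨(1 - s) • A + s • C, ⟨1 - s, s, by linarith, hs0, by ring, rfl⟩, ?_⟩
  refine ⟨1 - t, t, by linarith, ht0, by ring, ?_⟩
  have key1 : e4 * A.1 + e2 * C.1 = e3 * B.1 + e1 * D.1 := by
    rw [he1, he2, he3, he4]; ring
  have key2 : e4 * A.2 + e2 * C.2 = e3 * B.2 + e1 * D.2 := by
    rw [he1, he2, he3, he4]; ring
  have hP : ∀ (r : ℝ) (X Y : ℝ × ℝ), r • X + (1 - r) • Y = (r * X.1 + (1-r) * Y.1, r * X.2 + (1-r) * Y.2) := by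
    intro r X Y; rfl
  apply Prod.ext
  · show (1 - t) * B.1 + t * D.1 = (1 - s) * A.1 + s * C.1
    rw [hs, ht]; field_simp; rw [hid]; linarith [key1]
  · show (1 - t) * B.2 + t * D.2 = (1 - s) * A.2 + s * C.2
    rw [hs, ht]; field_simp; rw [hid]; linarith [key2]






lemma nc_of_drawing {n : ℕ} {p : Fin n → ℝ × ℝ} {T : SimpleGraph (Fin n)}
    (hp : CCWConvex p) (hd : NoncrossingDrawing T p) :
    ∀ a b c d : Fin n, a < b → b < c → c < d → T.Adj a c → T.Adj b d → False := by
  intro a b c d hab hbc hcd hac hbd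
  obtain ⟨z, hz1, hz2⟩ := geom_cross (hp a b c hab hbc) (hp a b d hab (hbc.trans hcd))
    (hp a c d (hab.trans hbc) hcd) (hp b c d hbc hcd)
  have hne : s(a, c) ≠ s(b, d) := by
    intro h
    rw [Sym2.eq_iff] at h
    rcases h with ⟨rfl, rfl⟩ | ⟨rfl, rfl⟩
    · exact absurd hab (lt_irrefl _)
    · exact absurd (hab.trans (hbc.trans hcd)) (lt_irrefl _)
  have hz := hd a c b d hac hbd hne ⟨hz1, hz2⟩
  have hempty : (({a, c} : Set (Fin n)) ∩ {b, d}) = ∅ := by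
    ext x
    simp only [Set.mem_inter_iff, Set.mem_insert_iff, Set.mem_singleton_iff, Set.mem_empty_iff_false,
      iff_false, not_and]
    rintro (rfl | rfl) (rfl | rfl)
    · exact absurd hab (lt_irrefl _)
    · exact absurd (hab.trans (hbc.trans hcd)) (lt_irrefl _)
    · exact absurd hbc (lt_irrefl _)
    · exact absurd hcd (lt_irrefl _)
  rw [hempty] at hz
  simp at hz



lemma reach_of_mem_support {V : Type*} [DecidableEq V] {G : SimpleGraph V} {a b : V}
    (w : G.Walk a b) {x : V} (hx : x ∈ w.support) : G.Reachable a x :=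
  ⟨w.takeUntil x hx⟩

lemma walk_straddle {n : ℕ} {G : SimpleGraph (Fin n)} {a c : Fin n} (w : G.Walk a c) (m : Fin n)
    (hm : m ∉ w.support) (h1 : a < m) (h2 : m < c) :
    ∃ x y : Fin n, s(x, y) ∈ w.edges ∧ x < m ∧ m < y := by
  induction w with
  | nil => exact absurd (h1.trans h2) (lt_irrefl _)
  | @cons u b c hadj q ih =>
    have hmb : m ≠ b := fun h => hm (by simp [h, Walk.support_cons, q.start_mem_support])
    by_cases hb : b < m
    · obtain ⟨x, y, hxy, hx, hy⟩ := ih (fun h => hm (by simp [Walk.support_cons, h])) hb h2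
      exact ⟨x, y, by simp [Walk.edges_cons, hxy], hx, hy⟩
    · exact ⟨u, b, by simp [Walk.edges_cons], h1, lt_of_le_of_ne (not_lt.1 hb) hmb⟩

lemma walk_exit {n : ℕ} {G : SimpleGraph (Fin n)} {a c : Fin n} (w : G.Walk a c) (s t : Fin n)
    (hsup : ∀ x ∈ w.support, x ≠ s ∧ x ≠ t) (ha1 : s < a) (ha2 : a < t)
    (hc : ¬(s < c ∧ c < t)) :
    ∃ x y : Fin n, s(x, y) ∈ w.edges ∧ (s < x ∧ x < t) ∧ (y < s ∨ t < y) := by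
  induction w with
  | nil => exact absurd ⟨ha1, ha2⟩ hc
  | @cons u b c hadj q ih =>
    have hbmem : b ∈ (Walk.cons hadj q).support := by simp [Walk.support_cons, q.start_mem_support]
    by_cases hb : s < b ∧ b < t
    · obtain ⟨x, y, hxy, hx, hy⟩ := ih (fun x hx => hsup x (by simp [Walk.support_cons, hx])) hb.1 hb.2 hc
      exact ⟨x, y, by simp [Walk.edges_cons, hxy], hx, hy⟩
    · refine ⟨u, b, by simp [Walk.edges_cons], ⟨ha1, ha2⟩, ?_⟩
      obtain ⟨hbs, hbt⟩ := hsup b hbmem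
      rcases not_and_or.1 hb with h | h
      · exact Or.inl (lt_of_le_of_ne (not_lt.1 h) hbs)
      · exact Or.inr (lt_of_le_of_ne (not_lt.1 h) (Ne.symm hbt))






lemma no_alt_aux {n : ℕ} {T H : SimpleGraph (Fin n)} (hle : H ≤ T)
    (nc : ∀ a b c d : Fin n, a < b → b < c → c < d → T.Adj a c → T.Adj b d → False)
    {u v : Fin n} (hnr : ¬H.Reachable u v)
    {x1 x2 x3 x4 : Fin n} (h12 : x1 < x2) (h23 : x2 < x3) (h34 : x3 < x4)
    (hA1 : H.Reachable u x1) (hB2 : H.Reachable v x2)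
    (hA3 : H.Reachable u x3) (hB4 : H.Reachable v x4)
    (IH : ∀ s y2 y3 y4 : Fin n, s < x1 → s < y2 → y2 < y3 → y3 < y4 →
      H.Reachable v s → H.Reachable u y2 → H.Reachable v y3 → H.Reachable u y4 → False) :
    False := by
  have hdisj : ∀ {y z : Fin n}, H.Reachable u y → H.Reachable v z → y ≠ z := by
    intro y z hy hz h
    subst h
    exact hnr (hy.trans hz.symm)
  obtain ⟨WQ⟩ := hB2.symm.trans hB4
  have hx3Q : x3 ∉ WQ.support := fun h => hdisj hA3 (hB2.trans (reach_of_mem_support WQ h)) rfl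
  obtain ⟨s, t, hst, hs3, h3t⟩ := walk_straddle WQ x3 hx3Q h23 h34
  have hsreach : H.Reachable v s :=
    hB2.trans (reach_of_mem_support WQ (WQ.fst_mem_support_of_mem_edges hst))
  have htreach : H.Reachable v t :=
    hB2.trans (reach_of_mem_support WQ (WQ.snd_mem_support_of_mem_edges hst))
  have hAdjst : T.Adj s t := hle (WQ.adj_of_mem_edges hst)
  by_cases hx1s : x1 < s
  · obtain ⟨WP⟩ := hA1.symm.trans hA3
    have hsupR : ∀ y ∈ WP.reverse.support, y ≠ s ∧ y ≠ t := by
      intro y hy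
      rw [Walk.support_reverse, List.mem_reverse] at hy
      have hyr : H.Reachable u y := hA1.trans (reach_of_mem_support WP hy)
      exact ⟨hdisj hyr hsreach, hdisj hyr htreach⟩
    obtain ⟨α, β, hαβ, hαin, hβout⟩ := walk_exit WP.reverse s t hsupR hs3 h3t
      (fun h => lt_asymm hx1s h.1)
    have hAdjαβ : T.Adj α β := hle (WP.reverse.adj_of_mem_edges hαβ)
    rcases hβout with hβ | hβ
    · exact nc β s α t hβ hαin.1 hαin.2 hAdjαβ.symm hAdjst
    · exact nc s α t β hαin.1 hαin.2 hβ hAdjst hAdjαβ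
  · have hsx1 : s < x1 :=
      lt_of_le_of_ne (not_lt.1 hx1s) (fun h => hdisj hA1 hsreach h.symm)
    exact IH s x1 x2 x3 hsx1 hsx1 h12 h23 hsreach hA1 hB2 hA3

lemma no_alt {n : ℕ} {T H : SimpleGraph (Fin n)} (hle : H ≤ T)
    (nc : ∀ a b c d : Fin n, a < b → b < c → c < d → T.Adj a c → T.Adj b d → False)
    {u v : Fin n} (hnr : ¬H.Reachable u v) :
    ∀ x1 x2 x3 x4 : Fin n, x1 < x2 → x2 < x3 → x3 < x4 →
      H.Reachable u x1 → H.Reachable v x2 → H.Reachable u x3 → H.Reachable v x4 → False := by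
  have hnr' : ¬H.Reachable v u := fun h => hnr h.symm
  suffices h : ∀ k : ℕ, ∀ x1 x2 x3 x4 : Fin n, (x1 : ℕ) = k → x1 < x2 → x2 < x3 → x3 < x4 →
      ((H.Reachable u x1 ∧ H.Reachable v x2 ∧ H.Reachable u x3 ∧ H.Reachable v x4) ∨
       (H.Reachable v x1 ∧ H.Reachable u x2 ∧ H.Reachable v x3 ∧ H.Reachable u x4)) → False by
    intro x1 x2 x3 x4 h12 h23 h34 hA1 hB2 hA3 hB4
    exact h (x1 : ℕ) x1 x2 x3 x4 rfl h12 h23 h34 (Or.inl ⟨hA1, hB2, hA3, hB4⟩)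
  intro k
  induction k using Nat.strong_induction_on with
  | _ k IH =>
    rintro x1 x2 x3 x4 rfl h12 h23 h34 (⟨hA1, hB2, hA3, hB4⟩ | ⟨hB1, hA2, hB3, hA4⟩)
    · exact no_alt_aux hle nc hnr h12 h23 h34 hA1 hB2 hA3 hB4
        (fun s y2 y3 y4 hs hs2 h23' h34' hvs hu2 hv3 hu4 =>
          IH (s : ℕ) hs s y2 y3 y4 rfl hs2 h23' h34' (Or.inr ⟨hvs, hu2, hv3, hu4⟩))
    · exact no_alt_aux hle nc hnr' h12 h23 h34 hB1 hA2 hB3 hA4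
        (fun s y2 y3 y4 hs hs2 h23' h34' hus hv2 hu3 hv4 =>
          IH (s : ℕ) hs s y2 y3 y4 rfl hs2 h23' h34' (Or.inl ⟨hus, hv2, hu3, hv4⟩))



lemma isArc_of_no_alt {n : ℕ} (A : Set (Fin n))
    (h1 : ∀ a b c d : Fin n, a < b → b < c → c < d → a ∈ A → b ∉ A → c ∈ A → d ∉ A → False)
    (h2 : ∀ a b c d : Fin n, a < b → b < c → c < d → a ∉ A → b ∈ A → c ∉ A → d ∈ A → False) :
    IsArc A := by
  classical
  by_cases hA : A = ∅
  · exact ⟨0, 0, Nat.zero_le n, fun x => by simp [hA]⟩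
  by_cases hA' : A = Set.univ
  · refine ⟨0, n, le_rfl, fun x => ?_⟩
    simp only [hA', Set.mem_univ, true_iff]
    exact ⟨(x : ℕ), x.isLt, by simp [Nat.mod_eq_of_lt x.isLt]⟩
  have hAne : A.Nonempty := Set.nonempty_iff_ne_empty.2 hA
  have hBne : Aᶜ.Nonempty := Set.nonempty_compl.2 hA'
  set FA := A.toFinite.toFinset with hFA
  have FAne : FA.Nonempty := (Set.Finite.toFinset_nonempty _).2 hAne
  set l := FA.min' FAne with hl
  set r := FA.max' FAne with hr
  have hlA : l ∈ A := (Set.Finite.mem_toFinset _).1 (FA.min'_mem FAne)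
  have hrA : r ∈ A := (Set.Finite.mem_toFinset _).1 (FA.max'_mem FAne)
  have hl_le : ∀ a, a ∈ A → l ≤ a := fun a ha => FA.min'_le a ((Set.Finite.mem_toFinset _).2 ha)
  have hr_ge : ∀ a, a ∈ A → a ≤ r := fun a ha => FA.le_max' a ((Set.Finite.mem_toFinset _).2 ha)
  have hlr : (l : ℕ) ≤ (r : ℕ) := Fin.le_def.1 (hr_ge l hlA)
  by_cases hfull : ∀ m : Fin n, l ≤ m → m ≤ r → m ∈ A
  · refine ⟨(l : ℕ), (r : ℕ) - (l : ℕ) + 1, by have := r.isLt; omega, fun x => ?_⟩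
    constructor
    · intro hx
      have h1x : (l : ℕ) ≤ (x : ℕ) := Fin.le_def.1 (hl_le x hx)
      have h2x : (x : ℕ) ≤ (r : ℕ) := Fin.le_def.1 (hr_ge x hx)
      refine ⟨(x : ℕ) - (l : ℕ), by omega, ?_⟩
      rw [Nat.mod_eq_of_lt (by have := x.isLt; omega)]
      omega
    · rintro ⟨ρ, hρ, hx⟩
      have hrn := r.isLt
      rw [Nat.mod_eq_of_lt (by omega)] at hx
      exact hfull x (Fin.le_def.2 (by omega)) (Fin.le_def.2 (by omega))
  · push_neg at hfull
    obtain ⟨m, hlm, hmr, hmA⟩ := hfull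
    have hlm' : l < m := lt_of_le_of_ne hlm (fun h => hmA (h ▸ hlA))
    have hmr'' : m < r := lt_of_le_of_ne hmr (fun h => hmA (h ▸ hrA))
    have hBsub : ∀ b : Fin n, b ∉ A → l < b ∧ b < r := by
      intro b hb
      constructor
      · by_contra h
        have hbl : b < l := lt_of_le_of_ne (not_lt.1 h) (fun h' => hb (h' ▸ hlA))
        exact h2 b l m r hbl hlm' hmr'' hb hlA hmA hrA
      · by_contra h
        have hrb : r < b := lt_of_le_of_ne (not_lt.1 h) (fun h' => hb (h'.symm ▸ hrA))
        exact h1 l m r b hlm' hmr'' hrb hlA hmA hrA hb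
    set FB := Aᶜ.toFinite.toFinset with hFB
    have FBne : FB.Nonempty := (Set.Finite.toFinset_nonempty _).2 hBne
    set lB := FB.min' FBne with hlB
    set rB := FB.max' FBne with hrB
    have hlBA : lB ∉ A := Set.mem_compl_iff _ _ |>.1 ((Set.Finite.mem_toFinset _).1 (FB.min'_mem FBne))
    have hrBA : rB ∉ A := Set.mem_compl_iff _ _ |>.1 ((Set.Finite.mem_toFinset _).1 (FB.max'_mem FBne))
    have hlB_le : ∀ b : Fin n, b ∉ A → lB ≤ b := fun b hb =>
      FB.min'_le b ((Set.Finite.mem_toFinset _).2 hb)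
    have hrB_ge : ∀ b : Fin n, b ∉ A → b ≤ rB := fun b hb =>
      FB.le_max' b ((Set.Finite.mem_toFinset _).2 hb)
    have hlBrB : (lB : ℕ) ≤ (rB : ℕ) := Fin.le_def.1 (hlB_le rB hrBA)
    have hchar : ∀ x : Fin n, x ∈ A ↔ ((x : ℕ) < (lB : ℕ) ∨ (rB : ℕ) < (x : ℕ)) := by
      intro x
      constructor
      · intro hx
        by_contra hcon
        push_neg at hcon
        obtain ⟨hc1, hc2⟩ := hcon
        have hxlB : lB < x := Fin.lt_def.2 (lt_of_le_of_ne hc1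
          (fun h => hlBA (by rw [Fin.ext h]; exact hx)))
        have hxrB : x < rB := Fin.lt_def.2 (lt_of_le_of_ne hc2
          (fun h => hrBA (by rw [← Fin.ext h]; exact hx)))
        exact h1 l lB x rB (hBsub lB hlBA).1 hxlB hxrB hlA hlBA hx hrBA
      · intro h
        by_contra hxA
        have := Fin.le_def.1 (hlB_le x hxA)
        have := Fin.le_def.1 (hrB_ge x hxA)
        omega
    refine ⟨(rB : ℕ) + 1, n - ((rB : ℕ) + 1) + (lB : ℕ), by have := rB.isLt; omega, fun x => ?_⟩
    rw [hchar x]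
    have hrBn := rB.isLt
    have hxn := x.isLt
    constructor
    · rintro (h | h)
      · refine ⟨(x : ℕ) + n - ((rB : ℕ) + 1), by omega, ?_⟩
        have heq : (rB : ℕ) + 1 + ((x : ℕ) + n - ((rB : ℕ) + 1)) = (x : ℕ) + n := by omega
        rw [heq, Nat.add_mod_right, Nat.mod_eq_of_lt hxn]
      · refine ⟨(x : ℕ) - ((rB : ℕ) + 1), by omega, ?_⟩
        rw [Nat.mod_eq_of_lt (by omega)]
        omega
    · rintro ⟨ρ, hρ, hx⟩
      by_cases hc : (rB : ℕ) + 1 + ρ < n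
      · rw [Nat.mod_eq_of_lt hc] at hx
        omega
      · rw [Nat.mod_eq_sub_mod (by omega), Nat.mod_eq_of_lt (by omega)] at hx
        omega



lemma reach_or_reach {n : ℕ} {T : SimpleGraph (Fin n)} (hconn : T.Connected) (u v : Fin n) :
    ∀ w : Fin n, (T.deleteEdges {s(u, v)}).Reachable u w ∨ (T.deleteEdges {s(u, v)}).Reachable v w := by
  have key : ∀ (w z : Fin n) (W : T.Walk w z), z = u →
      (T.deleteEdges {s(u, v)}).Reachable u w ∨ (T.deleteEdges {s(u, v)}).Reachable v w := by
    intro w z W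
    induction W with
    | nil => rintro rfl; exact Or.inl (Reachable.refl _)
    | @cons a b c hadj q ih =>
      intro hz
      have ihb := ih hz
      by_cases hmem : s(b, a) ∈ ({s(u, v)} : Set (Sym2 (Fin n)))
      · simp only [Set.mem_singleton_iff, Sym2.eq_iff] at hmem
        rcases hmem with ⟨hb, ha⟩ | ⟨hb, ha⟩
        · subst ha; exact Or.inr (Reachable.refl _)
        · subst ha; exact Or.inl (Reachable.refl _)
      · have hadj' : (T.deleteEdges {s(u, v)}).Adj b a := by
          rw [deleteEdges_adj]
          exact ⟨hadj.symm, hmem⟩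
        exact ihb.imp (fun h => h.trans hadj'.reachable) (fun h => h.trans hadj'.reachable)
  intro w
  exact (hconn.preconnected w u).elim (fun W => key w u W rfl)

lemma not_reach {n : ℕ} {T : SimpleGraph (Fin n)} (hT : T.IsTree) {u v : Fin n} (huv : T.Adj u v) :
    ¬(T.deleteEdges {s(u, v)}).Reachable u v := by
  have hb := isAcyclic_iff_forall_adj_isBridge.mp hT.2 huv
  exact isBridge_iff.mp hb

lemma exists_inner_edge {n : ℕ} {T : SimpleGraph (Fin n)} (hT : T.IsTree) (hn : 3 ≤ n)
    (hstar : ¬∃ c : Fin n, ∀ w : Fin n, w ≠ c → T.Adj c w) :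
    ∃ u v u' v' : Fin n, T.Adj u v ∧ T.Adj u u' ∧ T.Adj v v' ∧ u' ≠ v ∧ v' ≠ u := by
  by_contra hno
  push_neg at hno
  have hno' : ∀ u v : Fin n, T.Adj u v → (∀ z, T.Adj u z → z = v) ∨ (∀ z, T.Adj v z → z = u) := by
    intro u v huv
    by_contra hcon
    push_neg at hcon
    obtain ⟨⟨a, ha, ha'⟩, ⟨b, hb, hb'⟩⟩ := hcon
    exact hb' (hno u v a b huv ha hb ha')
  have center : ∀ a b : Fin n, T.Adj a b → (∀ z, T.Adj a z → z = b) →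
      ∀ w : Fin n, w ≠ b → T.Adj b w := by
    intro a b hab hleaf w hwb
    by_cases hwa : w = a
    · rw [hwa]; exact hab.symm
    · obtain ⟨P, hP, -⟩ := hT.existsUnique_path a w
      cases P with
      | nil => exact absurd rfl (Ne.symm hwa)
      | @cons _ x _ h1 q =>
        have hx : x = b := hleaf x h1
        cases q with
        | nil => exact absurd hx hwb
        | @cons _ y _ h2 q2 =>
          rw [SimpleGraph.Walk.cons_isPath_iff] at hP
          rcases hno' x y h2 with hcase | hcase
          · have hay : a = y := hcase a (by rw [hx]; exact hab.symm)
            refine absurd ?_ hP.2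
            rw [SimpleGraph.Walk.support_cons, hay]
            exact List.mem_cons.2 (Or.inr q2.start_mem_support)
          · cases q2 with
            | nil => exact hx ▸ h2
            | @cons _ z _ h3 q3 =>
              have hz : z = x := hcase z h3
              have hP1 := hP.1
              rw [SimpleGraph.Walk.cons_isPath_iff] at hP1
              refine absurd ?_ hP1.2
              rw [← hz, SimpleGraph.Walk.support_cons]
              exact List.mem_cons.2 (Or.inr q3.start_mem_support)
  have h2n : 2 ≤ n := le_trans (by norm_num) hn
  have hne : (⟨0, by omega⟩ : Fin n) ≠ (⟨1, by omega⟩ : Fin n) := by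
    intro h; simpa using congrArg Fin.val h
  obtain ⟨W⟩ := hT.isConnected.preconnected ⟨0, by omega⟩ ⟨1, by omega⟩
  have hedge : ∃ a b : Fin n, T.Adj a b := by
    cases W with
    | cons h q => exact ⟨_, _, h⟩
  obtain ⟨a, b, hab⟩ := hedge
  rcases hno' a b hab with hcase | hcase
  · exact hstar ⟨b, center a b hab hcase⟩
  · exact hstar ⟨a, center b a hab.symm hcase⟩



lemma reach_comap_iff {n : ℕ} (π : Equiv.Perm (Fin n)) (H H2 : SimpleGraph (Fin n))
    (hadj : ∀ a b : Fin n, H2.Adj a b ↔ H.Adj (π a) (π b)) (a b : Fin n) :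
    H2.Reachable a b ↔ H.Reachable (π a) (π b) := by
  constructor
  · exact fun h => h.map (⟨⇑π, fun {x y} hxy => (hadj x y).1 hxy⟩ : H2 →g H)
  · intro h
    have h2 := h.map (⟨⇑π.symm, fun {x y} hxy => (hadj _ _).2 (by simpa using hxy)⟩ : H →g H2)
    have e1 : (⟨⇑π.symm, fun {x y} hxy => (hadj _ _).2 (by simpa using hxy)⟩ : H →g H2) (π a) = a := π.symm_apply_apply a
    have e2 : (⟨⇑π.symm, fun {x y} hxy => (hadj _ _).2 (by simpa using hxy)⟩ : H →g H2) (π b) = b := π.symm_apply_apply b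
    rwa [e1, e2] at h2


end Aux


theorem compatible_tree_gives_interval_partition {n : ℕ} (hn : 4 ≤ n)
    (p q : Fin n → ℝ × ℝ) (hp : CCWConvex p)
    (π : Equiv.Perm (Fin n)) (hq : CCWConvex (q ∘ π))
    (T : SimpleGraph (Fin n)) (hT : T.IsTree)
    (hstar : ¬ ∃ c : Fin n, ∀ w : Fin n, w ≠ c → T.Adj c w)
    (hdp : NoncrossingDrawing T p) (hdq : NoncrossingDrawing T q) :
    ∃ A B : Set (Fin n), A ∪ B = Set.univ ∧ Disjoint A B ∧
      2 ≤ A.ncard ∧ A.ncard ≤ B.ncard ∧ B.ncard ≤ n - 2 ∧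
      IsArc A ∧ IsArc (⇑π ⁻¹' A) ∧ IsArc B ∧ IsArc (⇑π ⁻¹' B) := by
  classical
  obtain ⟨u, v, u', v', huv, huu', hvv', hu'v, hv'u⟩ :=
    exists_inner_edge hT (by omega) hstar
  set H := T.deleteEdges {s(u, v)} with hH
  set A : Set (Fin n) := {w | H.Reachable u w} with hA
  set B : Set (Fin n) := {w | H.Reachable v w} with hB
  have hle : H ≤ T := deleteEdges_le _
  have hnr : ¬H.Reachable u v := not_reach hT huv
  have hnr' : ¬H.Reachable v u := fun h => hnr h.symm
  have hcover : A ∪ B = Set.univ := by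
    ext w
    simp only [Set.mem_union, Set.mem_setOf_eq, hA, hB, Set.mem_univ, iff_true]
    exact reach_or_reach hT.isConnected u v w
  have hdisj : Disjoint A B := by
    rw [Set.disjoint_left]
    intro w hw hw'
    exact hnr (hw.trans hw'.symm)
  have hmemA : ∀ w : Fin n, w ∈ A ↔ H.Reachable u w := fun w => Iff.rfl
  have hmemB : ∀ w : Fin n, w ∈ B ↔ H.Reachable v w := fun w => Iff.rfl
  have hnotA : ∀ w : Fin n, w ∉ A ↔ w ∈ B := by
    intro w
    constructor
    · intro hw
      have := (Set.ext_iff.1 hcover w).2 (Set.mem_univ w)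
      rcases this with h | h
      · exact absurd h hw
      · exact h
    · intro hw hw'
      exact (Set.disjoint_left.1 hdisj) hw' hw
  have hnotB : ∀ w : Fin n, w ∉ B ↔ w ∈ A := by
    intro w
    constructor
    · intro hw
      by_contra hw'
      exact hw ((hnotA w).1 hw')
    · intro hw hw'
      exact (Set.disjoint_left.1 hdisj) hw hw'
  -- p-side noncrossing
  have ncp := nc_of_drawing hp hdp
  have hArcA : IsArc A := by
    apply isArc_of_no_alt A
    · intro a b c d h1 h2 h3 ha hb hc hd
      exact no_alt hle ncp hnr a b c d h1 h2 h3 ha ((hnotA b).1 hb) hc ((hnotA d).1 hd)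
    · intro a b c d h1 h2 h3 ha hb hc hd
      exact no_alt hle ncp hnr' a b c d h1 h2 h3 ((hnotA a).1 ha) hb ((hnotA c).1 hc) hd
  have hArcB : IsArc B := by
    apply isArc_of_no_alt B
    · intro a b c d h1 h2 h3 ha hb hc hd
      exact no_alt hle ncp hnr' a b c d h1 h2 h3 ha ((hnotB b).1 hb) hc ((hnotB d).1 hd)
    · intro a b c d h1 h2 h3 ha hb hc hd
      exact no_alt hle ncp hnr a b c d h1 h2 h3 ((hnotB a).1 ha) hb ((hnotB c).1 hc) hd
  -- q-side
  set T2 := SimpleGraph.comap (⇑π) T with hT2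
  have hdq2 : NoncrossingDrawing T2 (q ∘ π) := by
    intro a b c d hab hcd hne
    have hne' : s(π a, π b) ≠ s(π c, π d) := by
      intro h
      apply hne
      rw [Sym2.eq_iff] at h ⊢
      rcases h with ⟨h1, h2⟩ | ⟨h1, h2⟩
      · exact Or.inl ⟨π.injective h1, π.injective h2⟩
      · exact Or.inr ⟨π.injective h1, π.injective h2⟩
    intro z hz
    obtain ⟨y, hy, hyz⟩ := hdq (π a) (π b) (π c) (π d) hab hcd hne' hz
    refine ⟨π.symm y, ?_, ?_⟩
    · simp only [Set.mem_inter_iff, Set.mem_insert_iff, Set.mem_singleton_iff] at hy ⊢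
      constructor
      · rcases hy.1 with h | h
        · exact Or.inl (by rw [h]; exact π.symm_apply_apply a)
        · exact Or.inr (by rw [h]; exact π.symm_apply_apply b)
      · rcases hy.2 with h | h
        · exact Or.inl (by rw [h]; exact π.symm_apply_apply c)
        · exact Or.inr (by rw [h]; exact π.symm_apply_apply d)
    · show q (π (π.symm y)) = z
      rw [π.apply_symm_apply]
      exact hyz
  have ncq := nc_of_drawing hq hdq2
  set u2 := π.symm u with hu2
  set v2 := π.symm v with hv2
  set H2 := T2.deleteEdges {s(u2, v2)} with hH2
  have hle2 : H2 ≤ T2 := deleteEdges_le _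
  have hadj2 : ∀ a b : Fin n, H2.Adj a b ↔ H.Adj (π a) (π b) := by
    intro a b
    rw [hH2, hH, deleteEdges_adj, deleteEdges_adj]
    have hsym : s(a, b) = s(u2, v2) ↔ s(π a, π b) = s(u, v) := by
      rw [Sym2.eq_iff, Sym2.eq_iff]
      constructor
      · rintro (⟨rfl, rfl⟩ | ⟨rfl, rfl⟩) <;> simp [hu2, hv2]
      · rintro (⟨h1, h2⟩ | ⟨h1, h2⟩)
        · exact Or.inl ⟨by rw [hu2, ← h1]; simp, by rw [hv2, ← h2]; simp⟩
        · exact Or.inr ⟨by rw [hv2, ← h1]; simp, by rw [hu2, ← h2]; simp⟩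
    constructor
    · rintro ⟨h1, h2⟩
      exact ⟨h1, fun hmem => h2 (by simpa using hsym.2 (by simpa using hmem))⟩
    · rintro ⟨h1, h2⟩
      exact ⟨h1, fun hmem => h2 (by simpa using hsym.1 (by simpa using hmem))⟩
  have hreach2 : ∀ a b : Fin n, H2.Reachable a b ↔ H.Reachable (π a) (π b) :=
    reach_comap_iff π H H2 hadj2
  have hnr2 : ¬H2.Reachable u2 v2 := by
    rw [hreach2]
    simpa [hu2, hv2] using hnr
  have hnr2' : ¬H2.Reachable v2 u2 := fun h => hnr2 h.symm
  have hmemA2 : ∀ w : Fin n, w ∈ ⇑π ⁻¹' A ↔ H2.Reachable u2 w := by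
    intro w
    rw [Set.mem_preimage, hmemA, hreach2]
    simp [hu2]
  have hmemB2 : ∀ w : Fin n, w ∈ ⇑π ⁻¹' B ↔ H2.Reachable v2 w := by
    intro w
    rw [Set.mem_preimage, hmemB, hreach2]
    simp [hv2]
  have hnotA2 : ∀ w : Fin n, w ∉ ⇑π ⁻¹' A ↔ H2.Reachable v2 w := by
    intro w
    rw [Set.mem_preimage, ← hmemB2, Set.mem_preimage]
    exact hnotA (π w)
  have hnotB2 : ∀ w : Fin n, w ∉ ⇑π ⁻¹' B ↔ H2.Reachable u2 w := by
    intro w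
    rw [Set.mem_preimage, ← hmemA2, Set.mem_preimage]
    exact hnotB (π w)
  have hArcA2 : IsArc (⇑π ⁻¹' A) := by
    apply isArc_of_no_alt
    · intro a b c d h1 h2 h3 ha hb hc hd
      exact no_alt hle2 ncq hnr2 a b c d h1 h2 h3
        ((hmemA2 a).1 ha) ((hnotA2 b).1 hb) ((hmemA2 c).1 hc) ((hnotA2 d).1 hd)
    · intro a b c d h1 h2 h3 ha hb hc hd
      exact no_alt hle2 ncq hnr2' a b c d h1 h2 h3
        ((hnotA2 a).1 ha) ((hmemA2 b).1 hb) ((hnotA2 c).1 hc) ((hmemA2 d).1 hd)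
  have hArcB2 : IsArc (⇑π ⁻¹' B) := by
    apply isArc_of_no_alt
    · intro a b c d h1 h2 h3 ha hb hc hd
      exact no_alt hle2 ncq hnr2' a b c d h1 h2 h3
        ((hmemB2 a).1 ha) ((hnotB2 b).1 hb) ((hmemB2 c).1 hc) ((hnotB2 d).1 hd)
    · intro a b c d h1 h2 h3 ha hb hc hd
      exact no_alt hle2 ncq hnr2 a b c d h1 h2 h3
        ((hnotB2 a).1 ha) ((hmemB2 b).1 hb) ((hnotB2 c).1 hc) ((hmemB2 d).1 hd)
  -- cardinalities
  have hu'A : u' ∈ A := by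
    rw [hmemA]
    refine Adj.reachable ?_
    rw [hH, deleteEdges_adj]
    refine ⟨huu', ?_⟩
    simp only [Set.mem_singleton_iff, Sym2.eq_iff]
    rintro (⟨-, h2⟩ | ⟨h1, -⟩)
    · exact hu'v h2
    · exact huv.ne h1
  have hv'B : v' ∈ B := by
    rw [hmemB]
    refine Adj.reachable ?_
    rw [hH, deleteEdges_adj]
    refine ⟨hvv', ?_⟩
    simp only [Set.mem_singleton_iff, Sym2.eq_iff]
    rintro (⟨h1, -⟩ | ⟨-, h2⟩)
    · exact huv.ne h1.symm
    · exact hv'u h2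
  have huA : u ∈ A := by rw [hmemA]
  have hvB : v ∈ B := by rw [hmemB]
  have h2A : 2 ≤ A.ncard := by
    have hsub : ({u, u'} : Set (Fin n)) ⊆ A := by
      rintro x (rfl | rfl)
      · exact huA
      · exact hu'A
    calc 2 = ({u, u'} : Set (Fin n)).ncard := (Set.ncard_pair huu'.ne).symm
    _ ≤ A.ncard := Set.ncard_le_ncard hsub A.toFinite
  have h2B : 2 ≤ B.ncard := by
    have hsub : ({v, v'} : Set (Fin n)) ⊆ B := by
      rintro x (rfl | rfl)
      · exact hvB
      · exact hv'B
    calc 2 = ({v, v'} : Set (Fin n)).ncard := (Set.ncard_pair hvv'.ne).symm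
    _ ≤ B.ncard := Set.ncard_le_ncard hsub B.toFinite
  have hsum : A.ncard + B.ncard = n := by
    rw [← Set.ncard_union_eq hdisj A.toFinite B.toFinite, hcover, Set.ncard_univ,
      Nat.card_eq_fintype_card, Fintype.card_fin]
  by_cases hcmp : A.ncard ≤ B.ncard
  · exact ⟨A, B, hcover, hdisj, h2A, hcmp, by omega, hArcA, hArcA2, hArcB, hArcB2⟩
  · refine ⟨B, A, by rw [Set.union_comm]; exact hcover, hdisj.symm, h2B, by omega, by omega,
      hArcB, hArcB2, hArcA, hArcA2⟩
end

section
/- Let n ≥ 2 and let p : Fin n → ℝ² be in counterclockwise convex position. Let I ⊆ Fin n be a nonempty proper cyclic arc, and let (s_0, …, s_{m−1}) be an enumeration of I (m = |I|) such that the path visiting p(s_0), …, p(s_{m−1}) in this order is noncrossing and s_{m−1} is an endpoint of I. Let ℓ ∉ I be a label such that I ∪ {ℓ} is again a cyclic arc. Then the extended path visiting p(s_0), …, p(s_{m−1}), p(ℓ) in this order is noncrossing. -/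
lemma mod_two {n : ℕ} (hn : 0 < n) (a : ℕ) (ha : a < 2*n) : a % n = a ∨ a % n + n = a := by
  rcases Nat.lt_or_ge a n with h | h
  · exact Or.inl (Nat.mod_eq_of_lt h)
  · right
    rw [Nat.mod_eq_sub_mod h, Nat.mod_eq_of_lt (by omega)]
    omega

lemma add_mod_inj {n : ℕ} (hn : 0 < n) {i r r' : ℕ} (hr : r < n) (hr' : r' < n)
    (h : (i + r) % n = (i + r') % n) : r = r' := by
  have hK : i % n < n := Nat.mod_lt _ hn
  rw [Nat.add_mod i r, Nat.add_mod i r', Nat.mod_eq_of_lt hr, Nat.mod_eq_of_lt hr'] at h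
  rcases mod_two hn (i % n + r) (by omega) with h1 | h1 <;>
    rcases mod_two hn (i % n + r') (by omega) with h2 | h2 <;> omega

lemma mod_succ_inj {n : ℕ} (hn : 0 < n) {a b : ℕ} (h : (a+1) % n = (b+1) % n) :
    a % n = b % n := by
  have hA : a % n < n := Nat.mod_lt _ hn
  have hB : b % n < n := Nat.mod_lt _ hn
  rw [Nat.add_mod a 1, Nat.add_mod b 1] at h
  rcases mod_two hn (a % n + 1 % n) (by have := Nat.mod_le 1 n; omega) with h1 | h1 <;>
    rcases mod_two hn (b % n + 1 % n) (by have := Nat.mod_le 1 n; omega) with h2 | h2 <;> omega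

lemma exists_rep {n : ℕ} (hn : 0 < n) (k b : ℕ) (hb : b < n) : ∃ r < n, b = (k + r) % n := by
  have hK : k % n < n := Nat.mod_lt _ hn
  have hr : (b + n - k % n) % n < n := Nat.mod_lt _ hn
  refine ⟨(b + n - k % n) % n, hr, ?_⟩
  have h1 := mod_two hn (b + n - k % n) (by omega)
  rw [Nat.add_mod, Nat.mod_eq_of_lt hr]
  have h2 := mod_two hn (k % n + (b + n - k % n) % n) (by omega)
  have h3 : (k % n + (b + n - k % n) % n) % n < n := Nat.mod_lt _ hn
  rcases h1 with h1 | h1 <;> rcases h2 with h2 | h2 <;> omega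

lemma det2_rot (u v w : ℝ × ℝ) : det2 (v - u) (w - u) = det2 (w - v) (u - v) := by
  simp only [det2, Prod.fst_sub, Prod.snd_sub]
  ring

lemma det2_swap (u v : ℝ × ℝ) : det2 u v = -det2 v u := by
  simp only [det2]; ring

lemma orient_shift {n : ℕ} {p : Fin n → ℝ × ℝ} (hp : CCWConvex p)
    (i r1 r2 r3 : ℕ) (h12 : r1 < r2) (h23 : r2 < r3) (h3 : r3 < n)
    (a b c : Fin n) (ha : (a : ℕ) = (i + r1) % n) (hb : (b : ℕ) = (i + r2) % n)
    (hc : (c : ℕ) = (i + r3) % n) :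
    0 < det2 (p b - p a) (p c - p a) := by
  have hn : 0 < n := by omega
  have hK : i % n < n := Nat.mod_lt _ hn
  have e1 : (i + r1) % n = (i % n + r1) % n := by
    rw [Nat.add_mod i r1, Nat.mod_eq_of_lt (show r1 < n by omega)]
  have e2 : (i + r2) % n = (i % n + r2) % n := by
    rw [Nat.add_mod i r2, Nat.mod_eq_of_lt (show r2 < n by omega)]
  have e3 : (i + r3) % n = (i % n + r3) % n := by
    rw [Nat.add_mod i r3, Nat.mod_eq_of_lt h3]
  have c1 := mod_two hn (i % n + r1) (by omega)
  have c2 := mod_two hn (i % n + r2) (by omega)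
  have c3 := mod_two hn (i % n + r3) (by omega)
  have tri : ((a:ℕ) < (b:ℕ) ∧ (b:ℕ) < (c:ℕ)) ∨ ((b:ℕ) < (c:ℕ) ∧ (c:ℕ) < (a:ℕ)) ∨
      ((c:ℕ) < (a:ℕ) ∧ (a:ℕ) < (b:ℕ)) := by
    rw [ha, e1, hb, e2, hc, e3]
    rcases c1 with c1 | c1 <;> rcases c2 with c2 | c2 <;> rcases c3 with c3 | c3 <;> omega
  rcases tri with ⟨h1, h2⟩ | ⟨h1, h2⟩ | ⟨h1, h2⟩
  · exact hp a b c h1 h2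
  · rw [det2_rot (p a) (p b) (p c)]
    exact hp b c a h1 h2
  · rw [det2_rot (p a) (p b) (p c), det2_rot (p b) (p c) (p a)]
    exact hp c a b h1 h2

lemma extend_lemma {n m : ℕ} (p : Fin n → ℝ × ℝ) (hm : 1 ≤ m) (s : Fin m → Fin n)
    (hpath : NoncrossingPath (p ∘ s)) (ℓ : Fin n) (ε : ℝ) (hε : ε = 1 ∨ ε = -1)
    (hside : ∀ j : Fin m, (j : ℕ) < m - 1 →
      0 < ε * det2 (p ℓ - p (s ⟨m - 1, by omega⟩)) (p (s j) - p (s ⟨m - 1, by omega⟩))) :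
    NoncrossingPath (fun j : Fin (m + 1) =>
      if h : (j : ℕ) < m then p (s ⟨j, h⟩) else p ℓ) := by
  set q := p ℓ with hq
  set bp := p (s ⟨m - 1, by omega⟩) with hbp
  set L : ℝ × ℝ → ℝ := fun z => ε * det2 (q - bp) (z - bp) with hLdef
  have Lb : L bp = 0 := by simp only [hLdef, det2, sub_self]; simp
  have Lq : L q = 0 := by simp only [hLdef, det2]; ring
  have Lcomb : ∀ (a c : ℝ) (u v : ℝ × ℝ), a + c = 1 → L (a • u + c • v) = a * L u + c * L v := by
    intro a c u v hac
    have hc : c = 1 - a := by linarith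
    subst hc
    simp only [hLdef, det2, Prod.fst_sub, Prod.snd_sub, Prod.fst_add, Prod.snd_add,
      Prod.smul_fst, Prod.smul_snd, smul_eq_mul]
    ring
  have gval : ∀ (a : ℕ) (h1 : a < m) (h2 : a < m + 1),
      (fun j : Fin (m + 1) => if h : (j : ℕ) < m then p (s ⟨j, h⟩) else q) ⟨a, h2⟩
        = p (s ⟨a, h1⟩) := by
    intro a h1 h2
    simp only [dif_pos h1]
  intro k l hk hl hkl
  rcases Nat.lt_or_ge (l + 1) m with hlt | hge
  · -- all indices among old path
    have hkm : k < m := by omega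
    have hk1m : k + 1 < m := by omega
    have hlm : l < m := by omega
    have h := hpath k l hk1m hlt hkl
    rw [gval k hkm, gval (k+1) hk1m, gval l hlm, gval (l+1) hlt]
    simpa [Function.comp] using h
  · -- new edge case : l + 1 = m
    have hleq : l = m - 1 := by omega
    have hlm : l < m := by omega
    have gtop : ∀ (h2 : l + 1 < m + 1),
        (fun j : Fin (m + 1) => if h : (j : ℕ) < m then p (s ⟨j, h⟩) else q) ⟨l + 1, h2⟩
          = q := by
      intro h2
      simp only [dif_neg (show ¬ (l + 1 < m) by omega)]
    have glast : ∀ (h2 : l < m + 1),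
        (fun j : Fin (m + 1) => if h : (j : ℕ) < m then p (s ⟨j, h⟩) else q) ⟨l, h2⟩
          = bp := by
      intro h2
      rw [gval l hlm, hbp]
      have he : (⟨l, hlm⟩ : Fin m) = ⟨m - 1, by omega⟩ := Fin.mk_eq_mk.mpr hleq
      rw [he]
    by_cases hadj : l = k + 1
    · rw [if_pos hadj]
      have hkm : k < m := by omega
      have hkm1 : k < m - 1 := by omega
      have hcast : (⟨k + 1, hk⟩ : Fin (m+1)) = (⟨l, by omega⟩ : Fin (m+1)) :=
        Fin.mk_eq_mk.mpr hadj.symm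
      rw [gval k hkm, gtop, hcast, glast]
      have hLu : 0 < L (p (s ⟨k, hkm⟩)) := hside ⟨k, hkm⟩ hkm1
      ext z
      simp only [Set.mem_inter_iff, Set.mem_singleton_iff]
      constructor
      · rintro ⟨hz1, hz2⟩
        obtain ⟨a, c, ha, hc, hac, hz⟩ := hz1
        obtain ⟨a', c', ha', hc', hac', hz'⟩ := hz2
        have e1 : L z = a * L (p (s ⟨k, hkm⟩)) + c * L bp := by
          rw [← hz]; exact Lcomb a c _ bp hac
        have e2 : L z = a' * L bp + c' * L q := by
          rw [← hz']; exact Lcomb a' c' bp q hac'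
        have hz0 : L z = 0 := by rw [e2, Lb, Lq]; ring
        rw [Lb] at e1
        have ha0 : a = 0 := by
          rcases eq_or_lt_of_le ha with h' | h'
          · exact h'.symm
          · nlinarith
        have hc1 : c = 1 := by linarith
        rw [← hz, ha0, hc1, zero_smul, one_smul, zero_add]
      · rintro rfl
        exact ⟨right_mem_segment ℝ _ bp, left_mem_segment ℝ bp q⟩
    · rw [if_neg hadj]
      have hkm : k < m := by omega
      have hk1m : k + 1 < m := by omega
      have hkm1 : k < m - 1 := by omega
      have hk1m1 : k + 1 < m - 1 := by omega
      rw [gval k hkm, gval (k+1) hk1m, gtop, glast]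
      have hLu : 0 < L (p (s ⟨k, hkm⟩)) := hside ⟨k, hkm⟩ hkm1
      have hLv : 0 < L (p (s ⟨k + 1, hk1m⟩)) := hside ⟨k + 1, hk1m⟩ hk1m1
      rw [Set.disjoint_left]
      rintro z hz1 hz2
      obtain ⟨a, c, ha, hc, hac, hz⟩ := hz1
      obtain ⟨a', c', ha', hc', hac', hz'⟩ := hz2
      have e1 : L z = a * L (p (s ⟨k, hkm⟩)) + c * L (p (s ⟨k + 1, hk1m⟩)) := by
        rw [← hz]; exact Lcomb a c _ _ hac
      have e2 : L z = a' * L bp + c' * L q := by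
        rw [← hz']; exact Lcomb a' c' bp q hac'
      have hz0 : L z = 0 := by rw [e2, Lb, Lq]; ring
      have hpos : 0 < L z := by
        rw [e1]
        rcases eq_or_lt_of_le ha with h' | h'
        · have hc1 : c = 1 := by linarith
          rw [← h', hc1]
          simpa using hLv
        · nlinarith
      linarith

lemma arc_remove_endpoint {n i t rb : ℕ} {I : Set (Fin n)} {b : Fin n} (hn : 0 < n)
    (ht1 : 1 ≤ t) (htn : t < n)
    (hIc : ∀ x : Fin n, x ∈ I ↔ ∃ r < t, (x : ℕ) = (i + r) % n)
    (hb : (b : ℕ) = (i + rb) % n) (hrbt : rb < t)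
    (hend : IsArc (I \ {b})) : rb = 0 ∨ rb = t - 1 := by
  rcases Nat.eq_or_lt_of_le ht1 with ht | ht2
  · left; omega
  by_contra hcon
  push_neg at hcon
  obtain ⟨h0, hT⟩ := hcon
  have hrb1 : 1 ≤ rb := by omega
  have hrb2 : rb ≤ t - 2 := by omega
  obtain ⟨k, v, hv, hA⟩ := hend
  have hvn : v < n := by
    rcases Nat.lt_or_ge v n with h | h
    · exact h
    exfalso
    obtain ⟨r, hrn, hr⟩ := exists_rep hn k (b : ℕ) b.isLt
    have : b ∈ I \ {b} := (hA b).2 ⟨r, by omega, hr⟩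
    exact this.2 rfl
  have he0 : (⟨i % n, Nat.mod_lt _ hn⟩ : Fin n) ∈ I \ {b} := by
    constructor
    · exact (hIc _).2 ⟨0, ht1, by simp⟩
    · intro h
      have hv0 : (i + 0) % n = (i + rb) % n := by
        rw [← hb]
        simp only [Set.mem_singleton_iff] at h
        rw [← h]
        simp
      have := add_mod_inj hn (by omega) (by omega) hv0
      omega
  have he1 : (⟨(i + (t - 1)) % n, Nat.mod_lt _ hn⟩ : Fin n) ∈ I \ {b} := by
    constructor
    · exact (hIc _).2 ⟨t - 1, by omega, rfl⟩
    · intro h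
      have hv0 : (i + (t - 1)) % n = (i + rb) % n := by
        rw [← hb]
        simp only [Set.mem_singleton_iff] at h
        rw [← h]
      have := add_mod_inj hn (by omega) (by omega) hv0
      omega
  obtain ⟨r1, hr1v, hr1⟩ := (hA _).1 he0
  obtain ⟨r2, hr2v, hr2⟩ := (hA _).1 he1
  simp only at hr1 hr2
  have hshift : ∀ d, (k + r1 + d) % n = (i + d) % n := by
    intro d
    have hb0 : (k + r1) % n = i % n := hr1.symm
    rw [Nat.add_mod (k + r1) d, hb0, ← Nat.add_mod]
  rcases lt_trichotomy r1 r2 with h | h | h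
  · -- r2 - r1 = t - 1, then position rb gives contradiction
    have h1 : (i + (r2 - r1)) % n = (i + (t - 1)) % n := by
      have h2 := hshift (r2 - r1)
      rw [show k + r1 + (r2 - r1) = k + r2 from by omega] at h2
      rw [← h2, ← hr2]
    have h2 : r2 - r1 = t - 1 := add_mod_inj hn (by omega) (by omega) h1
    have hy : (⟨(k + (r1 + rb)) % n, Nat.mod_lt _ hn⟩ : Fin n) ∈ I \ {b} :=
      (hA _).2 ⟨r1 + rb, by omega, rfl⟩
    apply hy.2
    simp only [Set.mem_singleton_iff]
    apply Fin.val_injective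
    show (k + (r1 + rb)) % n = (b : ℕ)
    rw [hb, ← hshift rb, show k + r1 + rb = k + (r1 + rb) from by omega]
  · -- e0 = e1 impossible: t ≥ 2
    have h1 : (i + 0) % n = (i + (t - 1)) % n := by
      rw [Nat.add_zero, hr1, h, ← hr2]
    have := add_mod_inj hn (by omega) (by omega) h1
    omega
  · -- element at position t
    have hy : (⟨(k + (r2 + 1)) % n, Nat.mod_lt _ hn⟩ : Fin n) ∈ I \ {b} :=
      (hA _).2 ⟨r2 + 1, by omega, rfl⟩
    obtain ⟨r, hrt, hr⟩ := (hIc _).1 hy.1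
    simp only at hr
    have h1 : (k + (r2 + 1)) % n = (i + t) % n := by
      have hb2 : (k + r2) % n = (i + (t - 1)) % n := hr2.symm
      have h2 : (k + (r2 + 1)) % n = (i + (t - 1) + 1) % n := by
        rw [show k + (r2 + 1) = (k + r2) + 1 from by omega, Nat.add_mod (k + r2) 1, hb2,
          ← Nat.add_mod]
      rw [h2, show i + (t - 1) + 1 = i + t from by omega]
    have h2 : (i + r) % n = (i + t) % n := by rw [← hr, h1]
    have := add_mod_inj hn (by omega) htn h2
    omega

lemma arc_insert_adj {n i t : ℕ} {I : Set (Fin n)} {ℓ : Fin n} (hn : 0 < n)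
    (ht1 : 1 ≤ t) (htn : t < n)
    (hIc : ∀ x : Fin n, x ∈ I ↔ ∃ r < t, (x : ℕ) = (i + r) % n)
    (hl : ℓ ∉ I) (harc : IsArc (insert ℓ I)) :
    (ℓ : ℕ) = (i + t) % n ∨ (ℓ : ℕ) = (i + (n - 1)) % n := by
  obtain ⟨j, u, hu, hJ⟩ := harc
  have he0I : (⟨i % n, Nat.mod_lt _ hn⟩ : Fin n) ∈ I := (hIc _).2 ⟨0, ht1, by simp⟩
  obtain ⟨r1, hr1u, hr1⟩ := (hJ _).1 (Set.mem_insert_of_mem _ he0I)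
  simp only at hr1
  obtain ⟨rl, hrlu, hrl⟩ := (hJ ℓ).1 (Set.mem_insert _ _)
  by_cases hr10 : r1 = 0
  · -- j ≡ i : walk forward to find ℓ at position t
    subst hr10
    have hbase : (j + 0) % n = i % n := hr1.symm
    have hshift : ∀ d, (j + d) % n = (i + d) % n := by
      intro d
      rw [Nat.add_mod j d, Nat.add_mod i d, show j % n = i % n from by simpa using hbase]
    have hrl' : (ℓ : ℕ) = (i + rl) % n := by rw [hrl, hshift]
    have hrlt : t ≤ rl := by
      by_contra h
      push_neg at h
      exact hl ((hIc ℓ).2 ⟨rl, h, hrl'⟩)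
    rcases Nat.eq_or_lt_of_le hrlt with h | h
    · left; rw [hrl', ← h]
    · -- t < rl < u, so (i+t) % n is in J
      have hyJ : (⟨(i + t) % n, Nat.mod_lt _ hn⟩ : Fin n) ∈ insert ℓ I :=
        (hJ _).2 ⟨t, by omega, by simp [hshift t]⟩
      rcases hyJ with hyl | hyI
      · left
        rw [← hyl]
      · exfalso
        obtain ⟨r, hrt, hr⟩ := (hIc _).1 hyI
        simp only at hr
        have := add_mod_inj hn (by omega) htn hr.symm
        omega
  · -- r1 ≥ 1 : the predecessor of e0 is in J and must be ℓ
    right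
    have hyJ : (⟨(j + (r1 - 1)) % n, Nat.mod_lt _ hn⟩ : Fin n) ∈ insert ℓ I :=
      (hJ _).2 ⟨r1 - 1, by omega, rfl⟩
    have hyval : (j + (r1 - 1)) % n = (i + (n - 1)) % n := by
      have h1 : (j + (r1 - 1) + 1) % n = (i + (n - 1) + 1) % n := by
        rw [show j + (r1 - 1) + 1 = j + r1 from by omega,
          show i + (n - 1) + 1 = i + n from by omega, Nat.add_mod_right, ← hr1]
      exact mod_succ_inj hn h1
    rcases hyJ with hyl | hyI
    · rw [← hyl]
      exact hyval
    · exfalso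
      obtain ⟨r, hrt, hr⟩ := (hIc _).1 hyI
      simp only at hr
      have h2 : (i + r) % n = (i + (n - 1)) % n := by rw [← hr, hyval]
      have := add_mod_inj hn (by omega) (by omega) h2
      omega

theorem greedy_extension_noncrossing {n : ℕ} (hn : 2 ≤ n)
    (p : Fin n → ℝ × ℝ) (hp : CCWConvex p)
    (I : Set (Fin n)) (hI : IsArc I) (hne : I.Nonempty) (hproper : I ≠ Set.univ)
    (m : ℕ) (hm : 1 ≤ m) (s : Fin m → Fin n) (hs : Function.Injective s)
    (hrange : ∀ x : Fin n, x ∈ I ↔ ∃ j : Fin m, s j = x)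
    (hpath : NoncrossingPath (p ∘ s))
    (hend : IsArc (I \ {s ⟨m - 1, by omega⟩}))
    (ℓ : Fin n) (hℓ : ℓ ∉ I) (harc : IsArc (insert ℓ I)) :
    NoncrossingPath (fun j : Fin (m + 1) =>
      if h : (j : ℕ) < m then p (s ⟨j, h⟩) else p ℓ) := by
  have hn0 : 0 < n := by omega
  have hm1 : m - 1 < m := by omega
  obtain ⟨i, t, htn', hIc⟩ := hI
  obtain ⟨x0, hx0⟩ := hne
  obtain ⟨r0, hr0t, _⟩ := (hIc x0).1 hx0
  have ht1 : 1 ≤ t := by omega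
  have htn : t < n := by
    rcases Nat.lt_or_ge t n with h | h
    · exact h
    · exfalso
      apply hproper
      ext x
      simp only [Set.mem_univ, iff_true]
      obtain ⟨r, hrn, hr⟩ := exists_rep hn0 i (x : ℕ) x.isLt
      exact (hIc x).2 ⟨r, by omega, hr⟩
  have hbI : s ⟨m - 1, hm1⟩ ∈ I := (hrange _).2 ⟨⟨m - 1, hm1⟩, rfl⟩
  obtain ⟨rb, hrbt, hrb⟩ := (hIc _).1 hbI
  have hrb01 : rb = 0 ∨ rb = t - 1 := arc_remove_endpoint hn0 ht1 htn hIc hrb hrbt hend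
  have hlc : (ℓ : ℕ) = (i + t) % n ∨ (ℓ : ℕ) = (i + (n - 1)) % n :=
    arc_insert_adj hn0 ht1 htn hIc hℓ harc
  have key : ∀ j : Fin m, (j : ℕ) < m - 1 →
      ∃ rx, rx < t ∧ rx ≠ rb ∧ ((s j : Fin n) : ℕ) = (i + rx) % n := by
    intro j hj
    obtain ⟨rx, h1, h2⟩ := (hIc (s j)).1 ((hrange _).2 ⟨j, rfl⟩)
    refine ⟨rx, h1, ?_, h2⟩
    intro hEq
    have heq2 : s j = s ⟨m - 1, hm1⟩ := by
      apply Fin.val_injective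
      rw [h2, hrb, hEq]
    have hj2 := hs heq2
    have hjv : (j : ℕ) = m - 1 := congrArg Fin.val hj2
    omega
  rcases hrb01 with hrb0 | hrbt1 <;> rcases hlc with hl1 | hl2
  · -- rb = 0, ℓ = (i+t) % n : ε = -1
    refine extend_lemma p hm s hpath ℓ (-1) (Or.inr rfl) ?_
    intro j hj
    obtain ⟨rx, hrxt, hrxb, hrx⟩ := key j hj
    show 0 < (-1 : ℝ) * det2 (p ℓ - p (s ⟨m - 1, hm1⟩)) (p (s j) - p (s ⟨m - 1, hm1⟩))
    have h1 : 0 < det2 (p (s j) - p (s ⟨m - 1, hm1⟩)) (p ℓ - p (s ⟨m - 1, hm1⟩)) := by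
      refine orient_shift hp i 0 rx t (by omega) hrxt htn (s ⟨m - 1, hm1⟩) (s j) ℓ ?_ hrx hl1
      rw [hrb, hrb0]
    have h2 := det2_swap (p ℓ - p (s ⟨m - 1, hm1⟩)) (p (s j) - p (s ⟨m - 1, hm1⟩))
    linarith
  · -- rb = 0, ℓ = (i+(n-1)) % n : ε = -1
    refine extend_lemma p hm s hpath ℓ (-1) (Or.inr rfl) ?_
    intro j hj
    obtain ⟨rx, hrxt, hrxb, hrx⟩ := key j hj
    show 0 < (-1 : ℝ) * det2 (p ℓ - p (s ⟨m - 1, hm1⟩)) (p (s j) - p (s ⟨m - 1, hm1⟩))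
    have h1 : 0 < det2 (p (s ⟨m - 1, hm1⟩) - p ℓ) (p (s j) - p ℓ) := by
      refine orient_shift hp (i + (n - 1)) 0 1 (rx + 1) (by omega) (by omega) (by omega)
        ℓ (s ⟨m - 1, hm1⟩) (s j) ?_ ?_ ?_
      · rw [Nat.add_zero]; exact hl2
      · rw [show i + (n - 1) + 1 = i + n from by omega, Nat.add_mod_right, hrb, hrb0,
          Nat.add_zero]
      · rw [show i + (n - 1) + (rx + 1) = i + rx + n from by omega, Nat.add_mod_right]
        exact hrx
    rw [det2_rot (p ℓ) (p (s ⟨m - 1, hm1⟩)) (p (s j))] at h1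
    have h2 := det2_swap (p ℓ - p (s ⟨m - 1, hm1⟩)) (p (s j) - p (s ⟨m - 1, hm1⟩))
    linarith
  · -- rb = t-1, ℓ = (i+t) % n : ε = 1
    refine extend_lemma p hm s hpath ℓ 1 (Or.inl rfl) ?_
    intro j hj
    obtain ⟨rx, hrxt, hrxb, hrx⟩ := key j hj
    show 0 < (1 : ℝ) * det2 (p ℓ - p (s ⟨m - 1, hm1⟩)) (p (s j) - p (s ⟨m - 1, hm1⟩))
    have h1 : 0 < det2 (p (s ⟨m - 1, hm1⟩) - p (s j)) (p ℓ - p (s j)) := by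
      refine orient_shift hp i rx (t - 1) t (by omega) (by omega) htn (s j)
        (s ⟨m - 1, hm1⟩) ℓ hrx ?_ hl1
      rw [hrb, hrbt1]
    rw [det2_rot (p (s j)) (p (s ⟨m - 1, hm1⟩)) (p ℓ)] at h1
    linarith
  · -- rb = t-1, ℓ = (i+(n-1)) % n : ε = 1
    refine extend_lemma p hm s hpath ℓ 1 (Or.inl rfl) ?_
    intro j hj
    obtain ⟨rx, hrxt, hrxb, hrx⟩ := key j hj
    show 0 < (1 : ℝ) * det2 (p ℓ - p (s ⟨m - 1, hm1⟩)) (p (s j) - p (s ⟨m - 1, hm1⟩))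
    have h1 : 0 < det2 (p (s j) - p ℓ) (p (s ⟨m - 1, hm1⟩) - p ℓ) := by
      refine orient_shift hp (i + (n - 1)) 0 (rx + 1) t (by omega) (by omega) (by omega)
        ℓ (s j) (s ⟨m - 1, hm1⟩) ?_ ?_ ?_
      · rw [Nat.add_zero]; exact hl2
      · rw [show i + (n - 1) + (rx + 1) = i + rx + n from by omega, Nat.add_mod_right]
        exact hrx
      · rw [show i + (n - 1) + t = i + (t - 1) + n from by omega, Nat.add_mod_right, hrb, hrbt1]
    rw [det2_rot (p ℓ) (p (s j)) (p (s ⟨m - 1, hm1⟩)),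
      det2_rot (p (s j)) (p (s ⟨m - 1, hm1⟩)) (p ℓ)] at h1
    linarith
end
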